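/- Let μ > 0 and λ ∈ [−1,0), and set b(τ) := μ(1+τ)^{−λ}. There exist constants c0 > 0, C > 0, K > 0 and T0 ≥ 0, depending only on μ and λ, with the following property: for every r with 0 ≤ r ≤ c0, every pair of times T0 ≤ s ≤ t, and every twice differentiable function y : ℝ → ℝ satisfying y″(τ) + r²·y(τ) + b(τ)·y′(τ) + b′(τ)·y(τ) = 0 for all τ ∈ [s,t] with initial data y(s) = 0 and y′(s) = 1, one has |y(t)| ≤ (K / b(t))·exp( −C·r²·∫_s^t b(τ)^{−1} dτ ). -/

import Mathlib

open Set intervalIntegral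

private lemma keyPoly (B B' R Y P : ℝ) (hB : 0 < B) (h1 : 4*B' ≤ B^2) (hR : 0 ≤ R)
    (h2 : 4*R ≤ B) :
    (-2*R^2*B*Y^2 - 2*B*P^2 - 2*R^2*Y*P - 2*B'*Y*P) * (4*B^3) ≤
      (16*B'^2 - R^2*B^2) * ((P+B*Y)^2 + R^2*Y^2 + P^2) := by
  have h16 : 16*R^2 ≤ B^2 := by nlinarith
  nlinarith [sq_nonneg (B^2*P + 4*R^2*B*Y), sq_nonneg (B^2*P + 4*B'*(P+B*Y)),
    mul_nonneg (sub_nonneg.2 h16) (mul_nonneg (mul_nonneg (sq_nonneg R) (sq_nonneg B)) (sq_nonneg Y)),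
    mul_nonneg (sub_nonneg.2 h1) (mul_nonneg (sq_nonneg B) (sq_nonneg P)),
    mul_nonneg (mul_nonneg (sq_nonneg R) (sq_nonneg B)) (sq_nonneg (B*Y - P)),
    mul_nonneg (sub_nonneg.2 h16) (mul_nonneg (sq_nonneg B) (sq_nonneg P)),
    mul_nonneg (sq_nonneg B') (sq_nonneg (R*Y)), mul_nonneg (sq_nonneg B') (sq_nonneg P)]

private lemma keyDiv (B B' R Y P : ℝ) (hB : 0 < B) (h1 : 4*B' ≤ B^2) (hR : 0 ≤ R)
    (h2 : 4*R ≤ B) :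
    (-2*R^2*B*Y^2 - 2*B*P^2 - 2*R^2*Y*P - 2*B'*Y*P)
      + (R^2/(4*B) - 4*B'^2/B^3) * ((P+B*Y)^2 + R^2*Y^2 + P^2) ≤ 0 := by
  have key := keyPoly B B' R Y P hB h1 hR h2
  have hB3 : (0:ℝ) < 4*B^3 := by positivity
  have hL : (-2*R^2*B*Y^2 - 2*B*P^2 - 2*R^2*Y*P - 2*B'*Y*P) ≤
      ((16*B'^2 - R^2*B^2) * ((P+B*Y)^2 + R^2*Y^2 + P^2))/(4*B^3) := (le_div_iff₀ hB3).2 key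
  have hEq : (R^2/(4*B) - 4*B'^2/B^3) * ((P+B*Y)^2 + R^2*Y^2 + P^2)
      = -(((16*B'^2 - R^2*B^2) * ((P+B*Y)^2 + R^2*Y^2 + P^2))/(4*B^3)) := by
    field_simp
    ring
  linarith

private lemma hasDerivAt_bfun (μ lam τ : ℝ) (h : 0 < 1 + τ) :
    HasDerivAt (fun x : ℝ => μ * (1+x) ^ (-lam)) (-lam * μ * (1+τ) ^ (-lam-1)) τ := by
  have h1 : HasDerivAt (fun x : ℝ => 1 + x) 1 τ := by
    simpa using (hasDerivAt_id τ).const_add (1:ℝ)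
  have h2 : HasDerivAt (fun u : ℝ => u ^ (-lam)) (-lam * (1+τ) ^ (-lam-1)) (1+τ) :=
    Real.hasDerivAt_rpow_const (Or.inl h.ne')
  have h3 := h2.comp τ h1
  have h4 := HasDerivAt.const_mul μ h3
  exact h4.congr_deriv (by ring)

private lemma contOn_rpow_shift (p : ℝ) :
    ContinuousOn (fun σ : ℝ => (1+σ)^p) (Set.Ioi (-1:ℝ)) := by
  apply ContinuousOn.rpow_const
  · exact (continuous_const.add continuous_id).continuousOn
  · intro x hx
    simp only [Set.mem_Ioi] at hx
    exact Or.inl (by intro h; linarith)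

private lemma intInt_rpow_shift (p a b : ℝ) (ha : -1 < a) (hb : -1 < b) :
    IntervalIntegrable (fun σ : ℝ => (1+σ)^p) MeasureTheory.volume a b := by
  apply ((contOn_rpow_shift p).mono ?_).intervalIntegrable
  intro x hx
  exact Set.mem_Ioi.2 (lt_of_lt_of_le (lt_min ha hb) hx.1)

set_option maxHeartbeats 3000000 in
/-- Low-frequency upper bound on the Fourier multiplier `Φ₂ᵘ(t,s,r)` of the
damped wave equation `∂_t²u − Δu + ∂_t(b(t)u) = 0` with `b(τ) = μ(1+τ)^(−λ)`,
so that `b′(τ) = −λμ(1+τ)^(−λ−1)`. -/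
theorem Phi2u_low_frequency_upper_bound
    (μ lam : ℝ) (hμ : 0 < μ) (hlam : lam ∈ Set.Ico (-1:ℝ) 0) :
    ∃ c0 > (0:ℝ), ∃ C > (0:ℝ), ∃ K > (0:ℝ), ∃ T0 ≥ (0:ℝ),
      ∀ r : ℝ, 0 ≤ r → r ≤ c0 → ∀ s t : ℝ, T0 ≤ s → s ≤ t →
        ∀ y : ℝ → ℝ,
          (∀ τ : ℝ, DifferentiableAt ℝ y τ) →
          (∀ τ : ℝ, DifferentiableAt ℝ (deriv y) τ) →
          (∀ τ ∈ Set.Icc s t,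
            deriv (deriv y) τ + r^2 * y τ + (μ * (1+τ)^(-lam)) * deriv y τ
              + (-lam * μ * (1+τ)^(-lam-1)) * y τ = 0) →
          y s = 0 → deriv y s = 1 →
          |y t| ≤ (K / (μ * (1+t)^(-lam))) *
            Real.exp (-C * r^2 * ∫ τ in s..t, (μ * (1+τ)^(-lam))⁻¹) := by
  obtain ⟨hlam1, hlam0⟩ := hlam
  have hlamsq : lam^2 ≤ 1 := by nlinarith
  refine ⟨μ/4, by positivity, 1/8, by norm_num, 2*Real.exp (2/μ), by positivity,
    4/μ, by positivity, ?_⟩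
  intro r hr0 hrc s t hT0s hst y hdy hdy' hode hys hy's
  have hs0 : (0:ℝ) < s := lt_of_lt_of_le (by positivity) hT0s
  have hst' : ∀ τ ∈ Set.Icc s t, (0:ℝ) < 1 + τ := fun τ hτ => by
    have := hτ.1; linarith
  have hsm1 : (-1:ℝ) < s := by linarith
  have htm1 : (-1:ℝ) < t := by linarith
  have ht0 : (0:ℝ) < 1 + t := by linarith
  -- Lyapunov function
  set H : ℝ → ℝ := fun τ =>
    (deriv y τ + (μ * (1+τ)^(-lam)) * y τ)^2 + r^2 * (y τ)^2 + (deriv y τ)^2 with hHdef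
  -- Gronwall weight integrand and primitive
  set g : ℝ → ℝ := fun σ => r^2/(4*μ) * (1+σ)^lam - (4*lam^2/μ) * (1+σ)^(lam-2) with hgdef
  set E : ℝ → ℝ := fun τ => ∫ σ in s..τ, g σ with hEdef
  have hgcont : ContinuousOn g (Set.Ioi (-1:ℝ)) := by
    rw [hgdef]
    exact (continuousOn_const.mul (contOn_rpow_shift lam)).sub
      (continuousOn_const.mul (contOn_rpow_shift (lam-2)))
  have hgint : ∀ a b : ℝ, -1 < a → -1 < b →
      IntervalIntegrable g MeasureTheory.volume a b := by
    intro a b ha hb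
    rw [hgdef]
    exact ((intInt_rpow_shift lam a b ha hb).const_mul _).sub
      ((intInt_rpow_shift (lam-2) a b ha hb).const_mul _)
  have hE : ∀ τ ∈ Set.Icc s t, HasDerivAt E (g τ) τ := by
    intro τ hτ
    have hτ1 : (-1:ℝ) < τ := by linarith [hτ.1]
    exact intervalIntegral.integral_hasDerivAt_right
      (hgint s τ hsm1 hτ1)
      (hgcont.stronglyMeasurableAtFilter isOpen_Ioi τ hτ1)
      (hgcont.continuousAt (isOpen_Ioi.mem_nhds hτ1))
  -- derivative of H
  have hH : ∀ τ ∈ Set.Icc s t, HasDerivAt H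
      (-2*r^2*(μ * (1+τ)^(-lam))*(y τ)^2 - 2*(μ * (1+τ)^(-lam))*(deriv y τ)^2
        - 2*r^2*(y τ)*(deriv y τ) - 2*(-lam * μ * (1+τ)^(-lam-1))*(y τ)*(deriv y τ)) τ := by
    intro τ hτ
    have hx : (0:ℝ) < 1 + τ := hst' τ hτ
    have hy : HasDerivAt y (deriv y τ) τ := (hdy τ).hasDerivAt
    have hP : HasDerivAt (deriv y) (deriv (deriv y) τ) τ := (hdy' τ).hasDerivAt
    have hb := hasDerivAt_bfun μ lam τ hx
    have hv := hP.add (hb.mul hy)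
    have hode' : deriv (deriv y) τ = -(r^2 * y τ + (μ * (1+τ)^(-lam)) * deriv y τ
        + (-lam * μ * (1+τ)^(-lam-1)) * y τ) := by
      have := hode τ hτ; linarith
    have hfull := ((hv.pow 2).add ((hy.pow 2).const_mul (r^2))).add (hP.pow 2)
    rw [hHdef]
    exact hfull.congr_deriv (by rw [hode']; simp only [Pi.add_apply, Pi.mul_apply]; ring)
  -- pointwise differential inequality
  have hkey : ∀ τ ∈ Set.Icc s t,
      (-2*r^2*(μ * (1+τ)^(-lam))*(y τ)^2 - 2*(μ * (1+τ)^(-lam))*(deriv y τ)^2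
        - 2*r^2*(y τ)*(deriv y τ) - 2*(-lam * μ * (1+τ)^(-lam-1))*(y τ)*(deriv y τ))
        + g τ * H τ ≤ 0 := by
    intro τ hτ
    have hx : (0:ℝ) < 1 + τ := hst' τ hτ
    have hpa : (0:ℝ) < (1+τ)^(-lam) := Real.rpow_pos_of_pos hx _
    have hpb : (0:ℝ) < (1+τ)^(-lam-1) := Real.rpow_pos_of_pos hx _
    have hBpos : 0 < μ * (1+τ)^(-lam) := by positivity
    have hx1 : (1:ℝ) ≤ 1 + τ := by
      have h1 : 4/μ ≤ τ := le_trans hT0s hτ.1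
      have h2 : 0 < 4/μ := by positivity
      linarith
    have hone : (1:ℝ) ≤ (1+τ)^(-lam) := Real.one_le_rpow hx1 (by linarith)
    have h4x : (4:ℝ) ≤ μ * (1+τ) := by
      have h1 : 4/μ ≤ τ := le_trans hT0s hτ.1
      rw [div_le_iff₀ hμ] at h1
      nlinarith
    have hxpow : (1+τ)^(-lam-1) * (1+τ) = (1+τ)^(-lam) := by
      rw [← Real.rpow_add_one hx.ne' (-lam-1)]
      congr 1; ring
    have h1 : 4*(-lam * μ * (1+τ)^(-lam-1)) ≤ (μ * (1+τ)^(-lam))^2 := by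
      have hnl1 : -lam ≤ 1 := by linarith
      have hxpow2 : μ^2*((1+τ)^(-lam-1)*(1+τ)) = μ^2*(1+τ)^(-lam) := by rw [hxpow]
      have f2 : 4*(μ*(1+τ)^(-lam-1)) ≤ μ^2 * (1+τ)^(-lam) := by
        nlinarith [mul_nonneg (mul_nonneg hμ.le hpb.le) (sub_nonneg.2 h4x), hxpow2]
      nlinarith [f2, mul_nonneg (mul_nonneg (by linarith : (0:ℝ) ≤ 1 + lam) hμ.le) hpb.le,
        mul_nonneg (mul_nonneg (mul_nonneg hμ.le hμ.le) hpa.le) (sub_nonneg.2 hone)]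
    have h2 : 4*r ≤ μ * (1+τ)^(-lam) := by
      have : μ ≤ μ * (1+τ)^(-lam) := by nlinarith
      linarith [hrc]
    -- identify g with r²/(4B) − 4B'²/B³
    have eA : r^2/(4*(μ*(1+τ)^(-lam))) = r^2/(4*μ)*(1+τ)^lam := by
      rw [Real.rpow_neg hx.le]
      have hne : ((1+τ):ℝ)^lam ≠ 0 := (Real.rpow_pos_of_pos hx _).ne'
      field_simp
    have eB : 4*(-lam*μ*(1+τ)^(-lam-1))^2/(μ*(1+τ)^(-lam))^3
        = (4*lam^2/μ) * (1+τ)^(lam-2) := by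
      have h3 : ((1+τ)^(-lam))^3 = (1+τ)^(-(3*lam)) := by
        rw [pow_succ, pow_succ, pow_one, ← Real.rpow_add hx, ← Real.rpow_add hx]
        congr 1; ring
      have h2' : ((1+τ)^(-lam-1))^2 = (1+τ)^(lam-2) * (1+τ)^(-(3*lam)) := by
        rw [sq, ← Real.rpow_add hx, ← Real.rpow_add hx]
        congr 1; ring
      rw [show (-lam*μ*(1+τ)^(-lam-1))^2 = lam^2*μ^2*((1+τ)^(-lam-1))^2 by ring,
        show (μ*(1+τ)^(-lam))^3 = μ^3*((1+τ)^(-lam))^3 by ring, h2', h3]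
      have hne : ((1+τ):ℝ)^(-(3*lam)) ≠ 0 := (Real.rpow_pos_of_pos hx _).ne'
      field_simp
    have hgτ : g τ = r^2/(4*(μ*(1+τ)^(-lam)))
        - 4*(-lam*μ*(1+τ)^(-lam-1))^2/(μ*(1+τ)^(-lam))^3 := by
      rw [hgdef, eA, eB]
    have hHτ : H τ = (deriv y τ + (μ * (1+τ)^(-lam)) * y τ)^2 + r^2 * (y τ)^2
        + (deriv y τ)^2 := by rw [hHdef]
    rw [hgτ, hHτ]
    have := keyDiv (μ*(1+τ)^(-lam)) (-lam*μ*(1+τ)^(-lam-1)) r (y τ) (deriv y τ)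
      hBpos h1 hr0 h2
    linarith [this]
  -- the weighted Lyapunov function is antitone
  have hant : AntitoneOn (fun τ => H τ * Real.exp (E τ)) (Set.Icc s t) := by
    apply antitoneOn_of_deriv_nonpos (convex_Icc s t)
    · intro τ hτ
      exact (((hH τ hτ).continuousAt).mul ((hE τ hτ).exp).continuousAt).continuousWithinAt
    · rw [interior_Icc]
      intro τ hτ
      have hτ' : τ ∈ Set.Icc s t := Set.Ioo_subset_Icc_self hτ
      exact ((hH τ hτ').mul ((hE τ hτ').exp)).differentiableAt.differentiableWithinAt
    · intro τ hτ
      rw [interior_Icc] at hτ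
      have hτ' : τ ∈ Set.Icc s t := Set.Ioo_subset_Icc_self hτ
      have hd : HasDerivAt (fun τ => H τ * Real.exp (E τ))
          ((-2*r^2*(μ * (1+τ)^(-lam))*(y τ)^2 - 2*(μ * (1+τ)^(-lam))*(deriv y τ)^2
            - 2*r^2*(y τ)*(deriv y τ) - 2*(-lam * μ * (1+τ)^(-lam-1))*(y τ)*(deriv y τ))
              * Real.exp (E τ)
            + H τ * (Real.exp (E τ) * g τ)) τ := (hH τ hτ').mul ((hE τ hτ').exp)
      rw [hd.deriv]
      have hk := hkey τ hτ'
      nlinarith [Real.exp_pos (E τ), sq_nonneg (Real.exp (E τ))]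
  clear_value H g E
  have hEs : E s = 0 := by rw [hEdef]; exact intervalIntegral.integral_same
  have hHs : H s = 2 := by
    rw [hHdef]; norm_num [hys, hy's]
  have hGts : H t * Real.exp (E t) ≤ H s * Real.exp (E s) :=
    hant (Set.left_mem_Icc.2 hst) (Set.right_mem_Icc.2 hst) hst
  have hGt2 : H t * Real.exp (E t) ≤ 2 := by
    rw [hEs, hHs, Real.exp_zero, mul_one] at hGts
    exact hGts
  have hHt : H t ≤ 2 * Real.exp (-(E t)) := by
    have h0 : H t = H t * Real.exp (E t) * Real.exp (-(E t)) := by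
      rw [mul_assoc, ← Real.exp_add]; simp
    rw [h0]
    exact mul_le_mul_of_nonneg_right hGt2 (Real.exp_pos _).le
  -- compute E t
  obtain ⟨J, hJdef⟩ : ∃ J : ℝ, J = ∫ σ in s..t, (1+σ)^lam := ⟨_, rfl⟩
  have hEt : E t = r^2/(4*μ) * J - (4*lam^2/μ) * ∫ σ in s..t, (1+σ)^(lam-2) := by
    simp only [hEdef, hgdef, hJdef]
    rw [intervalIntegral.integral_sub
      ((intInt_rpow_shift lam s t hsm1 htm1).const_mul _)
      ((intInt_rpow_shift (lam-2) s t hsm1 htm1).const_mul _),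
      intervalIntegral.integral_const_mul, intervalIntegral.integral_const_mul]
  have hI2 : (∫ σ in s..t, (1+σ)^(lam-2)) ≤ 1 := by
    have hcomp := intervalIntegral.integral_comp_add_left (a := s) (b := t)
      (fun x : ℝ => x^(lam-2)) 1
    rw [hcomp]
    have hne : lam - 2 ≠ -1 := by intro h; linarith
    have hnm : (0:ℝ) ∉ Set.uIcc (1+s) (1+t) := by
      rw [Set.uIcc_of_le (by linarith : 1+s ≤ 1+t)]
      intro h
      have := h.1
      linarith
    rw [integral_rpow (Or.inr ⟨hne, hnm⟩)]
    have ha : ((1:ℝ)+s)^(lam-2+1) ≤ 1 :=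
      Real.rpow_le_one_of_one_le_of_nonpos (by linarith) (by linarith)
    have hb : (0:ℝ) < ((1:ℝ)+t)^(lam-2+1) := Real.rpow_pos_of_pos (by linarith) _
    rw [div_le_iff_of_neg (by linarith : lam-2+1 < 0)]
    linarith
  have hI2nn : (0:ℝ) ≤ ∫ σ in s..t, (1+σ)^(lam-2) := by
    apply intervalIntegral.integral_nonneg hst
    intro x hx
    exact (Real.rpow_pos_of_pos (by linarith [hx.1] : (0:ℝ) < 1 + x) _).le
  have hEt' : -(E t) ≤ 4/μ - r^2/(4*μ) * J := by
    have h1 : (4*lam^2/μ) * (∫ σ in s..t, (1+σ)^(lam-2)) ≤ 4/μ := by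
      have hc : (0:ℝ) ≤ 4*lam^2/μ := by positivity
      calc (4*lam^2/μ) * (∫ σ in s..t, (1+σ)^(lam-2)) ≤ (4*lam^2/μ) * 1 :=
            mul_le_mul_of_nonneg_left hI2 hc
        _ ≤ 4/μ := by
            rw [mul_one, div_le_div_iff₀ hμ hμ]
            nlinarith
    rw [hEt]
    linarith
  -- rewrite the integral in the goal
  have hJint : (∫ τ in s..t, (μ * (1+τ)^(-lam))⁻¹) = μ⁻¹ * J := by
    rw [hJdef, ← intervalIntegral.integral_const_mul]
    apply intervalIntegral.integral_congr
    intro x hx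
    rw [Set.uIcc_of_le hst] at hx
    have hx0 : (0:ℝ) < 1 + x := by linarith [hx.1]
    simp only
    rw [mul_inv, Real.rpow_neg hx0.le, inv_inv]
  rw [hJint]
  set X := Real.exp (-(1/8) * r^2 * (μ⁻¹ * J)) with hXdef
  have hXpos : 0 < X := Real.exp_pos _
  have hX2 : X^2 = Real.exp (-(r^2/(4*μ)) * J) := by
    rw [hXdef, sq, ← Real.exp_add]
    congr 1; ring
  have hBt : 0 < μ * (1+t)^(-lam) := by
    have := Real.rpow_pos_of_pos ht0 (-lam); positivity
  have hsq : (μ * (1+t)^(-lam) * y t)^2 ≤ 2 * H t := by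
    simp only [hHdef]
    nlinarith [sq_nonneg ((deriv y t + μ*(1+t)^(-lam)*y t) + deriv y t),
      mul_nonneg (sq_nonneg r) (sq_nonneg (y t))]
  have hexp2 : Real.exp (2/μ)^2 = Real.exp (4/μ) := by
    rw [sq, ← Real.exp_add]; congr 1; ring
  have hchain : (μ * (1+t)^(-lam) * y t)^2 ≤ (2*Real.exp (2/μ) * X)^2 := by
    have e1 : (2*Real.exp (2/μ) * X)^2 = 4 * Real.exp (4/μ) * X^2 := by
      rw [mul_pow, mul_pow, hexp2]; ring
    have e2 : Real.exp (-(E t)) ≤ Real.exp (4/μ) * X^2 := by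
      rw [hX2, ← Real.exp_add]
      apply Real.exp_le_exp.2
      have : 4/μ + -(r^2/(4*μ)) * J = 4/μ - r^2/(4*μ) * J := by ring
      rw [this]
      exact hEt'
    calc (μ * (1+t)^(-lam) * y t)^2 ≤ 2 * H t := hsq
      _ ≤ 2 * (2 * Real.exp (-(E t))) := by linarith
      _ ≤ 4 * (Real.exp (4/μ) * X^2) := by nlinarith [e2]
      _ = (2*Real.exp (2/μ) * X)^2 := by rw [e1]; ring
  have habs : |μ * (1+t)^(-lam) * y t| ≤ 2*Real.exp (2/μ) * X := by
    have hc : 0 ≤ 2*Real.exp (2/μ)*X := by positivity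
    nlinarith [abs_nonneg (μ * (1+t)^(-lam) * y t), sq_abs (μ * (1+t)^(-lam) * y t)]
  rw [div_mul_eq_mul_div, le_div_iff₀ hBt]
  calc |y t| * (μ * (1+t)^(-lam)) = |μ * (1+t)^(-lam) * y t| := by
        rw [abs_mul, abs_of_pos hBt]; ring
    _ ≤ 2*Real.exp (2/μ) * X := habs
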